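/- Let φ be an LTL∨PSL formula, D = (I⁺, I⁻) a partition of the set I of subformulae of φ of the form s ≼ s', and A_{φ_D} the generalised nondeterministic Büchi automaton associated with φ_D. If φ_D is SLTL-satisfiable, then the language of A_{φ_D} is non-empty. -/

import Mathlib

/-! ### SLTL: syntax, models, satisfaction -/

inductive SForm : Type where
  | var : ℕ → SForm
  | le : ℕ → ℕ → SForm
  | tru : SForm
  | fls : SForm
  | neg : SForm → SForm
  | conj : SForm → SForm → SForm
  | dia : ℕ → SForm → SForm
  | box : ℕ → SForm → SForm
  | next : SForm → SForm
  | until_ : SForm → SForm → SForm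

/-- Traces: ω-sequences of propositional valuations. -/
abbrev Trace := ℕ → Set ℕ

/-- An SLTL model `(Π, λ)`; standpoint symbols are natural numbers, `0` is the
universal standpoint `*`. -/
structure SLTLModel where
  Pi : Set Trace
  lam : ℕ → Set Trace
  pi_nonempty : Pi.Nonempty
  lam_sub : ∀ s, lam s ⊆ Pi
  lam_nonempty : ∀ s, (lam s).Nonempty
  lam_star : lam 0 = Pi

def SSat (M : SLTLModel) : SForm → Trace → ℕ → Prop
  | .var p, σ, i => p ∈ σ i
  | .le s s', _, _ => M.lam s ⊆ M.lam s'
  | .tru, _, _ => True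
  | .fls, _, _ => False
  | .neg a, σ, i => ¬ SSat M a σ i
  | .conj a b, σ, i => SSat M a σ i ∧ SSat M b σ i
  | .dia s a, _, i => ∃ σ' ∈ M.lam s, SSat M a σ' i
  | .box s a, _, i => ∀ σ' ∈ M.lam s, SSat M a σ' i
  | .next a, σ, i => SSat M a σ (i + 1)
  | .until_ a b, σ, i =>
      ∃ i', i ≤ i' ∧ SSat M b σ i' ∧ ∀ i'', i ≤ i'' → i'' < i' → SSat M a σ i''

def SLTLSatisfiable (φ : SForm) : Prop :=
  ∃ M : SLTLModel, ∃ σ ∈ M.Pi, SSat M φ σ 0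

def SForm.impl (a b : SForm) : SForm := .neg (.conj a (.neg b))
def SForm.iffc (a b : SForm) : SForm := .conj (a.impl b) (b.impl a)
/-- `G φ := ¬(⊤ U ¬φ)`. -/
def SForm.G (a : SForm) : SForm := .neg (.until_ .tru (.neg a))
def bigAnd (l : List SForm) : SForm := l.foldr .conj .tru
/-- The list `[a, a+1, …, b]`. -/
def listIcc (a b : ℕ) : List ℕ := (List.range (b + 1 - a)).map (fun k => a + k)

/-- Propositional variables occurring in a formula. -/
def varsSF : SForm → Finset ℕ
  | .var p => {p}
  | .le _ _ => ∅
  | .tru => ∅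
  | .fls => ∅
  | .neg a => varsSF a
  | .conj a b => varsSF a ∪ varsSF b
  | .dia _ a => varsSF a
  | .box _ a => varsSF a
  | .next a => varsSF a
  | .until_ a b => varsSF a ∪ varsSF b

/-- Standpoint symbols occurring in a formula. -/
def standsSF : SForm → Finset ℕ
  | .var _ => ∅
  | .le s s' => {s, s'}
  | .tru => ∅
  | .fls => ∅
  | .neg a => standsSF a
  | .conj a b => standsSF a ∪ standsSF b
  | .dia s a => insert s (standsSF a)
  | .box s a => insert s (standsSF a)
  | .next a => standsSF a
  | .until_ a b => standsSF a ∪ standsSF b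

/-- No temporal connective (`X` or `U`) occurs in the formula. -/
def noTemp : SForm → Prop
  | .neg a => noTemp a
  | .conj a b => noTemp a ∧ noTemp b
  | .dia _ a => noTemp a
  | .box _ a => noTemp a
  | .next _ => False
  | .until_ _ _ => False
  | _ => True

/-- The fragment LTL∨PSL: no temporal connective occurs within the scope of a
standpoint modality. -/
def isLTLPSL : SForm → Prop
  | .neg a => isLTLPSL a
  | .conj a b => isLTLPSL a ∧ isLTLPSL b
  | .dia _ a => noTemp a
  | .box _ a => noTemp a
  | .next a => isLTLPSL a
  | .until_ a b => isLTLPSL a ∧ isLTLPSL b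
  | _ => True

def sizeSF : SForm → ℕ
  | .var _ => 1
  | .le _ _ => 1
  | .tru => 1
  | .fls => 1
  | .neg a => sizeSF a + 1
  | .conj a b => sizeSF a + sizeSF b + 1
  | .dia _ a => sizeSF a + 1
  | .box _ a => sizeSF a + 1
  | .next a => sizeSF a + 1
  | .until_ a b => sizeSF a + sizeSF b + 1

/-! ### The formula `φ_D` for a partition `D = (I⁺, I⁻)` of the `≼`-subformulae -/

/-- The pairs `(s, s')` such that `s ≼ s'` is a subformula of the given formula. -/
def leSubs : SForm → Finset (ℕ × ℕ)
  | .var _ => ∅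
  | .le s s' => {(s, s')}
  | .tru => ∅
  | .fls => ∅
  | .neg a => leSubs a
  | .conj a b => leSubs a ∪ leSubs b
  | .dia _ a => leSubs a
  | .box _ a => leSubs a
  | .next a => leSubs a
  | .until_ a b => leSubs a ∪ leSubs b

/-- `φ[I⁺ ↦ ⊤, I⁻ ↦ ⊥]`: replace each subformula `s ≼ s'` with `(s,s') ∈ P`
by `⊤` and each with `(s,s') ∈ N` by `⊥`. -/
def substLe (P N : Finset (ℕ × ℕ)) : SForm → SForm
  | .var p => .var p
  | .le s s' => if (s, s') ∈ P then .tru else if (s, s') ∈ N then .fls else .le s s'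
  | .tru => .tru
  | .fls => .fls
  | .neg a => .neg (substLe P N a)
  | .conj a b => .conj (substLe P N a) (substLe P N b)
  | .dia s a => .dia s (substLe P N a)
  | .box s a => .box s (substLe P N a)
  | .next a => .next (substLe P N a)
  | .until_ a b => .until_ (substLe P N a) (substLe P N b)

/-- `ψ_D := G( ⋀_{(s≼s')∈I⁺} (s ≼ s') ∧ ⋀_{(s≼s')∈I⁻} (◇_s p_{s,s'} ∧ ¬◇_{s'} p_{s,s'}) )`,
where `pv (s,s')` is the fresh variable `p_{s,s'}`. -/
noncomputable def psiD (P N : Finset (ℕ × ℕ)) (pv : ℕ × ℕ → ℕ) : SForm :=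
  SForm.G (.conj
    (bigAnd (P.toList.map (fun pr => SForm.le pr.1 pr.2)))
    (bigAnd (N.toList.map (fun pr =>
      SForm.conj (.dia pr.1 (.var (pv pr))) (.neg (.dia pr.2 (.var (pv pr))))))))

/-- `φ_D := φ[I⁺ ↦ ⊤, I⁻ ↦ ⊥] ∧ ψ_D`. -/
noncomputable def phiD (φ : SForm) (P N : Finset (ℕ × ℕ)) (pv : ℕ × ℕ → ℕ) : SForm :=
  .conj (substLe P N φ) (psiD P N pv)

/-! ### The closure, s-elementary sets, and the generalised Büchi automaton -/

/-- Subformulae of a formula. -/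
def subfs : SForm → Set SForm
  | .var p => {SForm.var p}
  | .le s s' => {SForm.le s s'}
  | .tru => {SForm.tru}
  | .fls => {SForm.fls}
  | .neg a => insert (SForm.neg a) (subfs a)
  | .conj a b => insert (SForm.conj a b) (subfs a ∪ subfs b)
  | .dia s a => insert (SForm.dia s a) (subfs a)
  | .box s a => insert (SForm.box s a) (subfs a)
  | .next a => insert (SForm.next a) (subfs a)
  | .until_ a b => insert (SForm.until_ a b) (subfs a ∪ subfs b)

/-- Negation, identifying `¬¬ψ` with `ψ`. -/
def negId : SForm → SForm
  | .neg a => a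
  | a => .neg a

/-- The closure `cl(φ)`: the smallest set containing all subformulae of `φ`,
`⊤` and `⊥`, closed under negation (identifying `¬¬ψ` with `ψ`), and
containing `X(ψ U ψ')` whenever `ψ U ψ'` is in it. -/
inductive Cl (φ : SForm) : SForm → Prop where
  | base {ψ} : ψ ∈ subfs φ → Cl φ ψ
  | tru : Cl φ .tru
  | fls : Cl φ .fls
  | nc {ψ} : Cl φ ψ → Cl φ (negId ψ)
  | nextU {a b} : Cl φ (.until_ a b) → Cl φ (.next (.until_ a b))

/-- A PSL model with a finite nonempty set `W` of precisifications;
`Vs` is the valuation on standpoint symbols (with `0` the universal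
standpoint `*`) and `Vp` the valuation on propositional variables. -/
structure PSLM (W : Type) where
  Vs : ℕ → Set W
  Vp : ℕ → Set W
  hfin : Finite W
  hne : Nonempty W
  hs : ∀ s, (Vs s).Nonempty
  hstar : Vs 0 = Set.univ

/-- PSL satisfaction of an SLTL formula without temporal connectives
(the clauses for `X` and `U` are never used on PSL formulae). -/
def FSat {W : Type} (M : PSLM W) : SForm → W → Prop
  | .var p, π => π ∈ M.Vp p
  | .le s s', _ => M.Vs s ⊆ M.Vs s'
  | .tru, _ => True
  | .fls, _ => False
  | .neg a, π => ¬ FSat M a π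
  | .conj a b, π => FSat M a π ∧ FSat M b π
  | .dia s a, _ => ∃ π' ∈ M.Vs s, FSat M a π'
  | .box s a, _ => ∀ π' ∈ M.Vs s, FSat M a π'
  | .next _, _ => False
  | .until_ _ _, _ => False

/-- `B` is standpoint-consistent: the conjunction of all PSL formulae in `B`
is PSL-satisfiable. -/
def StandCons (B : Set SForm) : Prop :=
  ∃ (W : Type) (M : PSLM W) (π : W), ∀ ψ ∈ B, noTemp ψ → FSat M ψ π

/-- `B ⊆ cl(φ)` is maximally consistent. -/
def MaxCons (φ : SForm) (B : Set SForm) : Prop :=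
  (∀ ψ ∈ B, Cl φ ψ) ∧ SForm.tru ∈ B ∧ SForm.fls ∉ B ∧
  (∀ ψ, Cl φ (.neg ψ) → (ψ ∈ B ↔ SForm.neg ψ ∉ B)) ∧
  (∀ a b, Cl φ (.conj a b) → (SForm.conj a b ∈ B ↔ a ∈ B ∧ b ∈ B)) ∧
  (∀ a b, Cl φ (.until_ a b) →
    (SForm.until_ a b ∈ B ↔ b ∈ B ∨ (a ∈ B ∧ SForm.next (.until_ a b) ∈ B)))

/-- s-elementary: maximally consistent and standpoint-consistent. -/
def SElem (φ : SForm) (B : Set SForm) : Prop := MaxCons φ B ∧ StandCons B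

/-- `B₀B₁…` is an accepting run of the generalised nondeterministic Büchi
automaton `A_φ` on the word `A₀A₁…`:  `B₀` is initial (`φ ∈ B₀`), every `Bᵢ`
is a state (s-elementary), `Aᵢ = Bᵢ ∩ P(φ)`, consecutive states respect the
transition relation, and every accepting set is visited infinitely often. -/
def AcceptingRun (φ : SForm) (B : ℕ → Set SForm) (A : ℕ → Set ℕ) : Prop :=
  φ ∈ B 0 ∧ (∀ i, SElem φ (B i)) ∧
  (∀ i, A i = {p : ℕ | SForm.var p ∈ B i ∧ p ∈ varsSF φ}) ∧
  (∀ i ψ, Cl φ (.next ψ) → (SForm.next ψ ∈ B i ↔ ψ ∈ B (i + 1))) ∧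
  (∀ a b, Cl φ (.until_ a b) → ∀ i, ∃ j, i ≤ j ∧ (SForm.until_ a b ∉ B j ∨ b ∈ B j))

/-- The language of `A_φ` is non-empty. -/
def LangNonempty (φ : SForm) : Prop :=
  ∃ (B : ℕ → Set SForm) (A : ℕ → Set ℕ), AcceptingRun φ B A


/-! ### Auxiliary lemmas -/

lemma subfs_self : ∀ ψ : SForm, ψ ∈ subfs ψ := by
  intro ψ; cases ψ <;> simp [subfs]

lemma subfs_trans : ∀ {φ ψ χ : SForm}, ψ ∈ subfs φ → χ ∈ subfs ψ → χ ∈ subfs φ := by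
  intro φ
  induction φ with
  | var p => intro ψ χ h1 h2; simp [subfs] at h1 ⊢; subst h1; simpa [subfs] using h2
  | le s s' => intro ψ χ h1 h2; simp [subfs] at h1 ⊢; subst h1; simpa [subfs] using h2
  | tru => intro ψ χ h1 h2; simp [subfs] at h1 ⊢; subst h1; simpa [subfs] using h2
  | fls => intro ψ χ h1 h2; simp [subfs] at h1 ⊢; subst h1; simpa [subfs] using h2
  | neg a ih =>
      intro ψ χ h1 h2
      simp only [subfs, Set.mem_insert_iff] at h1 ⊢
      rcases h1 with rfl | h1
      · simpa [subfs] using h2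
      · exact Or.inr (ih h1 h2)
  | conj a b iha ihb =>
      intro ψ χ h1 h2
      simp only [subfs, Set.mem_insert_iff, Set.mem_union] at h1 ⊢
      rcases h1 with rfl | h1 | h1
      · simpa [subfs] using h2
      · exact Or.inr (Or.inl (iha h1 h2))
      · exact Or.inr (Or.inr (ihb h1 h2))
  | dia s a ih =>
      intro ψ χ h1 h2
      simp only [subfs, Set.mem_insert_iff] at h1 ⊢
      rcases h1 with rfl | h1
      · simpa [subfs] using h2
      · exact Or.inr (ih h1 h2)
  | box s a ih =>
      intro ψ χ h1 h2
      simp only [subfs, Set.mem_insert_iff] at h1 ⊢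
      rcases h1 with rfl | h1
      · simpa [subfs] using h2
      · exact Or.inr (ih h1 h2)
  | next a ih =>
      intro ψ χ h1 h2
      simp only [subfs, Set.mem_insert_iff] at h1 ⊢
      rcases h1 with rfl | h1
      · simpa [subfs] using h2
      · exact Or.inr (ih h1 h2)
  | until_ a b iha ihb =>
      intro ψ χ h1 h2
      simp only [subfs, Set.mem_insert_iff, Set.mem_union] at h1 ⊢
      rcases h1 with rfl | h1 | h1
      · simpa [subfs] using h2
      · exact Or.inr (Or.inl (iha h1 h2))
      · exact Or.inr (Or.inr (ihb h1 h2))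

lemma subfs_negId (ψ : SForm) : subfs (negId ψ) ⊆ insert (negId ψ) (subfs ψ) := by
  cases ψ <;> simp only [negId, subfs] <;> intro χ hχ <;> simp_all [Set.subset_def]

lemma cl_of_mem {φ ψ χ : SForm} (h : Cl φ ψ) (hm : χ ∈ subfs ψ) : Cl φ χ := by
  induction h generalizing χ with
  | base hb => exact Cl.base (subfs_trans hb hm)
  | tru => simp [subfs] at hm; subst hm; exact Cl.tru
  | fls => simp [subfs] at hm; subst hm; exact Cl.fls
  | nc h ih =>
      rcases subfs_negId _ hm with rfl | hm'
      · exact Cl.nc h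
      · exact ih hm'
  | nextU h ih =>
      simp only [subfs, Set.mem_insert_iff] at hm
      rcases hm with rfl | hm
      · exact Cl.nextU h
      · exact ih hm

lemma vars_of_subfs : ∀ {φ ψ : SForm}, ψ ∈ subfs φ → varsSF ψ ⊆ varsSF φ := by
  intro φ
  induction φ with
  | var p => intro ψ h; simp [subfs] at h; subst h; exact Finset.Subset.refl _
  | le s s' => intro ψ h; simp [subfs] at h; subst h; exact Finset.Subset.refl _
  | tru => intro ψ h; simp [subfs] at h; subst h; exact Finset.Subset.refl _
  | fls => intro ψ h; simp [subfs] at h; subst h; exact Finset.Subset.refl _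
  | neg a ih =>
      intro ψ h; simp only [subfs, Set.mem_insert_iff] at h
      rcases h with rfl | h; · exact Finset.Subset.refl _
      · simpa [varsSF] using ih h
  | conj a b iha ihb =>
      intro ψ h; simp only [subfs, Set.mem_insert_iff, Set.mem_union] at h
      rcases h with rfl | h | h
      · exact Finset.Subset.refl _
      · exact Finset.Subset.trans (iha h) (by simp [varsSF])
      · exact Finset.Subset.trans (ihb h) (by simp [varsSF])
  | dia s a ih =>
      intro ψ h; simp only [subfs, Set.mem_insert_iff] at h
      rcases h with rfl | h; · exact Finset.Subset.refl _
      · simpa [varsSF] using ih h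
  | box s a ih =>
      intro ψ h; simp only [subfs, Set.mem_insert_iff] at h
      rcases h with rfl | h; · exact Finset.Subset.refl _
      · simpa [varsSF] using ih h
  | next a ih =>
      intro ψ h; simp only [subfs, Set.mem_insert_iff] at h
      rcases h with rfl | h; · exact Finset.Subset.refl _
      · simpa [varsSF] using ih h
  | until_ a b iha ihb =>
      intro ψ h; simp only [subfs, Set.mem_insert_iff, Set.mem_union] at h
      rcases h with rfl | h | h
      · exact Finset.Subset.refl _
      · exact Finset.Subset.trans (iha h) (by simp [varsSF])
      · exact Finset.Subset.trans (ihb h) (by simp [varsSF])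

lemma stands_of_subfs : ∀ {φ ψ : SForm}, ψ ∈ subfs φ → standsSF ψ ⊆ standsSF φ := by
  intro φ
  induction φ with
  | var p => intro ψ h; simp [subfs] at h; subst h; exact Finset.Subset.refl _
  | le s s' => intro ψ h; simp [subfs] at h; subst h; exact Finset.Subset.refl _
  | tru => intro ψ h; simp [subfs] at h; subst h; exact Finset.Subset.refl _
  | fls => intro ψ h; simp [subfs] at h; subst h; exact Finset.Subset.refl _
  | neg a ih =>
      intro ψ h; simp only [subfs, Set.mem_insert_iff] at h
      rcases h with rfl | h; · exact Finset.Subset.refl _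
      · simpa [standsSF] using ih h
  | conj a b iha ihb =>
      intro ψ h; simp only [subfs, Set.mem_insert_iff, Set.mem_union] at h
      rcases h with rfl | h | h
      · exact Finset.Subset.refl _
      · exact Finset.Subset.trans (iha h) (by simp [standsSF])
      · exact Finset.Subset.trans (ihb h) (by simp [standsSF])
  | dia s a ih =>
      intro ψ h; simp only [subfs, Set.mem_insert_iff] at h
      rcases h with rfl | h; · exact Finset.Subset.refl _
      · exact Finset.Subset.trans (ih h) (by simp [standsSF, Finset.subset_insert])
  | box s a ih =>
      intro ψ h; simp only [subfs, Set.mem_insert_iff] at h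
      rcases h with rfl | h; · exact Finset.Subset.refl _
      · exact Finset.Subset.trans (ih h) (by simp [standsSF, Finset.subset_insert])
  | next a ih =>
      intro ψ h; simp only [subfs, Set.mem_insert_iff] at h
      rcases h with rfl | h; · exact Finset.Subset.refl _
      · simpa [standsSF] using ih h
  | until_ a b iha ihb =>
      intro ψ h; simp only [subfs, Set.mem_insert_iff, Set.mem_union] at h
      rcases h with rfl | h | h
      · exact Finset.Subset.refl _
      · exact Finset.Subset.trans (iha h) (by simp [standsSF])
      · exact Finset.Subset.trans (ihb h) (by simp [standsSF])

lemma vars_negId (ψ : SForm) : varsSF (negId ψ) = varsSF ψ := by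
  cases ψ <;> simp [negId, varsSF]

lemma stands_negId (ψ : SForm) : standsSF (negId ψ) = standsSF ψ := by
  cases ψ <;> simp [negId, standsSF]

lemma cl_vars {φ ψ : SForm} (h : Cl φ ψ) : varsSF ψ ⊆ varsSF φ := by
  induction h with
  | base hb => exact vars_of_subfs hb
  | tru => simp [varsSF]
  | fls => simp [varsSF]
  | nc h ih => rw [vars_negId]; exact ih
  | nextU h ih => simpa [varsSF] using ih

lemma cl_stands {φ ψ : SForm} (h : Cl φ ψ) : standsSF ψ ⊆ standsSF φ := by
  induction h with
  | base hb => exact stands_of_subfs hb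
  | tru => simp [standsSF]
  | fls => simp [standsSF]
  | nc h ih => rw [stands_negId]; exact ih
  | nextU h ih => simpa [standsSF] using ih

lemma until_unfold (M : SLTLModel) (a b : SForm) (σ : Trace) (i : ℕ) :
    SSat M (.until_ a b) σ i ↔
      SSat M b σ i ∨ (SSat M a σ i ∧ SSat M (.until_ a b) σ (i + 1)) := by
  constructor
  · rintro ⟨i', hle, hb, hall⟩
    rcases eq_or_lt_of_le hle with rfl | hlt
    · exact Or.inl hb
    · exact Or.inr ⟨hall i le_rfl hlt,
        ⟨i', hlt, hb, fun i'' h1 h2 => hall i'' (le_trans (Nat.le_succ i) h1) h2⟩⟩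
  · rintro (hb | ⟨ha, ⟨i', hle, hb, hall⟩⟩)
    · exact ⟨i, le_rfl, hb, fun i'' h1 h2 => absurd h1 (not_le.mpr h2)⟩
    · refine ⟨i', le_trans (Nat.le_succ i) hle, hb, fun i'' h1 h2 => ?_⟩
      rcases eq_or_lt_of_le h1 with rfl | h
      · exact ha
      · exact hall i'' h h2

/-- Encoding of a trace at time `i` as a finite amount of data. -/
def fEnc (φ : SForm) (M : SLTLModel) (i : ℕ) (τ : Trace) :
    (↥(varsSF φ) → Prop) × (↥(standsSF φ) → Prop) :=
  (fun p => (p : ℕ) ∈ τ i, fun s => τ ∈ M.lam (s : ℕ))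

/-- The finite set of precisifications. -/
def Wt (φ : SForm) (M : SLTLModel) (i : ℕ) : Type :=
  {x : (↥(varsSF φ) → Prop) × (↥(standsSF φ) → Prop) // x ∈ fEnc φ M i '' M.Pi}

instance (φ : SForm) (M : SLTLModel) (i : ℕ) : Finite (Wt φ M i) := by
  unfold Wt; infer_instance

/-- The induced PSL model. -/
def Mpsl (φ : SForm) (M : SLTLModel) (i : ℕ) : PSLM (Wt φ M i) where
  Vs s := if h : s ∈ standsSF φ then {w : Wt φ M i | w.val.2 ⟨s, h⟩} else Set.univ
  Vp p := if h : p ∈ varsSF φ then {w : Wt φ M i | w.val.1 ⟨p, h⟩} else ∅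
  hfin := inferInstance
  hne := by
    obtain ⟨τ, hτ⟩ := M.pi_nonempty
    exact ⟨⟨fEnc φ M i τ, ⟨τ, hτ, rfl⟩⟩⟩
  hs s := by
    by_cases h : s ∈ standsSF φ
    · obtain ⟨τ, hτ⟩ := M.lam_nonempty s
      refine ⟨⟨fEnc φ M i τ, ⟨τ, M.lam_sub s hτ, rfl⟩⟩, ?_⟩
      simp only [dif_pos h]
      exact hτ
    · obtain ⟨τ, hτ⟩ := M.pi_nonempty
      exact ⟨⟨fEnc φ M i τ, ⟨τ, hτ, rfl⟩⟩, by simp [dif_neg h]; exact Set.mem_univ _⟩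
  hstar := by
    by_cases h : (0 : ℕ) ∈ standsSF φ
    · ext w
      simp only [dif_pos h, Set.mem_setOf_eq, Set.mem_univ, iff_true]
      obtain ⟨τ, hτ, heq⟩ := w.prop
      rw [← heq]
      show τ ∈ M.lam 0
      rw [M.lam_star]; exact hτ
    · simp [dif_neg h]

lemma fsat_iff_ssat (φ : SForm) (M : SLTLModel) (i : ℕ) :
    ∀ ψ : SForm, noTemp ψ → varsSF ψ ⊆ varsSF φ → standsSF ψ ⊆ standsSF φ →
    ∀ (τ : Trace) (hτ : τ ∈ M.Pi),
      (FSat (Mpsl φ M i) ψ ⟨fEnc φ M i τ, ⟨τ, hτ, rfl⟩⟩ ↔ SSat M ψ τ i) := by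
  intro ψ
  induction ψ with
  | var p =>
      intro _ hv _ τ hτ
      have hp : p ∈ varsSF φ := hv (by simp [varsSF])
      show (⟨fEnc φ M i τ, ⟨τ, hτ, rfl⟩⟩ : Wt φ M i) ∈ (Mpsl φ M i).Vp p ↔ _
      simp only [Mpsl, dif_pos hp, Set.mem_setOf_eq]
      exact Iff.rfl
  | le s s' =>
      intro _ _ hst τ hτ
      have hs : s ∈ standsSF φ := hst (by simp [standsSF])
      have hs' : s' ∈ standsSF φ := hst (by simp [standsSF])
      show (Mpsl φ M i).Vs s ⊆ (Mpsl φ M i).Vs s' ↔ M.lam s ⊆ M.lam s'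
      simp only [Mpsl, dif_pos hs, dif_pos hs']
      constructor
      · intro hsub τ' hτ'
        have hw : (⟨fEnc φ M i τ', ⟨τ', M.lam_sub s hτ', rfl⟩⟩ : Wt φ M i) ∈
            {w : Wt φ M i | w.val.2 ⟨s, hs⟩} := hτ'
        exact hsub hw
      · intro hsub w hw
        obtain ⟨τ', hτ', heq⟩ := w.prop
        have h1 : τ' ∈ M.lam s := by
          have := hw
          simp only [Set.mem_setOf_eq, ← heq] at this
          exact this
        show w.val.2 ⟨s', hs'⟩
        rw [← heq]
        exact hsub h1
  | tru => intro _ _ _ τ hτ; simp [FSat, SSat]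
  | fls => intro _ _ _ τ hτ; simp [FSat, SSat]
  | neg a ih =>
      intro hnt hv hst τ hτ
      show ¬ _ ↔ ¬ _
      exact not_congr (ih hnt hv hst τ hτ)
  | conj a b iha ihb =>
      intro hnt hv hst τ hτ
      have hva : varsSF a ⊆ varsSF φ := Finset.Subset.trans (by simp [varsSF]) hv
      have hvb : varsSF b ⊆ varsSF φ := Finset.Subset.trans (by simp [varsSF]) hv
      have hsa : standsSF a ⊆ standsSF φ := Finset.Subset.trans (by simp [standsSF]) hst
      have hsb : standsSF b ⊆ standsSF φ := Finset.Subset.trans (by simp [standsSF]) hst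
      exact and_congr (iha hnt.1 hva hsa τ hτ) (ihb hnt.2 hvb hsb τ hτ)
  | dia s a ih =>
      intro hnt hv hst τ hτ
      have hs : s ∈ standsSF φ := hst (by simp [standsSF])
      have hsa : standsSF a ⊆ standsSF φ :=
        Finset.Subset.trans (by simp [standsSF, Finset.subset_insert]) hst
      show (∃ π' ∈ (Mpsl φ M i).Vs s, FSat (Mpsl φ M i) a π') ↔
        (∃ σ' ∈ M.lam s, SSat M a σ' i)
      simp only [Mpsl, dif_pos hs]
      constructor
      · rintro ⟨π', hπ', hFa⟩
        obtain ⟨τ', hτ', heq⟩ := π'.prop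
        have hπe : π' = ⟨fEnc φ M i τ', ⟨τ', hτ', rfl⟩⟩ := Subtype.ext heq.symm
        refine ⟨τ', ?_, ?_⟩
        · have := hπ'
          simp only [Set.mem_setOf_eq, ← heq] at this
          exact this
        · rw [hπe] at hFa
          exact (ih hnt hv hsa τ' hτ').mp hFa
      · rintro ⟨σ', hσ', hSa⟩
        have hσp : σ' ∈ M.Pi := M.lam_sub s hσ'
        refine ⟨⟨fEnc φ M i σ', ⟨σ', hσp, rfl⟩⟩, hσ', ?_⟩
        exact (ih hnt hv hsa σ' hσp).mpr hSa
  | box s a ih =>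
      intro hnt hv hst τ hτ
      have hs : s ∈ standsSF φ := hst (by simp [standsSF])
      have hsa : standsSF a ⊆ standsSF φ :=
        Finset.Subset.trans (by simp [standsSF, Finset.subset_insert]) hst
      show (∀ π' ∈ (Mpsl φ M i).Vs s, FSat (Mpsl φ M i) a π') ↔
        (∀ σ' ∈ M.lam s, SSat M a σ' i)
      simp only [Mpsl, dif_pos hs]
      constructor
      · intro hall σ' hσ'
        have hσp : σ' ∈ M.Pi := M.lam_sub s hσ'
        have := hall ⟨fEnc φ M i σ', ⟨σ', hσp, rfl⟩⟩ hσ'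
        exact (ih hnt hv hsa σ' hσp).mp this
      · intro hall π' hπ'
        obtain ⟨τ', hτ', heq⟩ := π'.prop
        have hπe : π' = ⟨fEnc φ M i τ', ⟨τ', hτ', rfl⟩⟩ := Subtype.ext heq.symm
        have h1 : τ' ∈ M.lam s := by
          have := hπ'
          simp only [Set.mem_setOf_eq, ← heq] at this
          exact this
        rw [hπe]
        exact (ih hnt hv hsa τ' hτ').mpr (hall τ' h1)
  | next a ih => intro hnt; exact absurd hnt (by simp [noTemp])
  | until_ a b iha ihb => intro hnt; exact absurd hnt (by simp [noTemp])

lemma standCons_of_sat (φ : SForm) (M : SLTLModel) (σ : Trace) (hσ : σ ∈ M.Pi) (i : ℕ) :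
    StandCons {ψ | Cl φ ψ ∧ SSat M ψ σ i} := by
  refine ⟨Wt φ M i, Mpsl φ M i, ⟨fEnc φ M i σ, ⟨σ, hσ, rfl⟩⟩, ?_⟩
  intro ψ hψ hnt
  exact (fsat_iff_ssat φ M i ψ hnt (cl_vars hψ.1) (cl_stands hψ.1) σ hσ).mpr hψ.2

theorem sat_implies_lang (φ : SForm) (h : SLTLSatisfiable φ) : LangNonempty φ := by
  obtain ⟨M, σ, hσ, hsat⟩ := h
  refine ⟨fun i => {ψ | Cl φ ψ ∧ SSat M ψ σ i},
    fun i => {p : ℕ | SForm.var p ∈ {ψ | Cl φ ψ ∧ SSat M ψ σ i} ∧ p ∈ varsSF φ},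
    ⟨Cl.base (subfs_self φ), hsat⟩, ?_, fun i => rfl, ?_, ?_⟩
  · -- s-elementary
    intro i
    refine ⟨⟨fun ψ hψ => hψ.1, ⟨Cl.tru, trivial⟩, fun h => h.2, ?_, ?_, ?_⟩,
      standCons_of_sat φ M σ hσ i⟩
    · intro ψ hcl
      have hψ : Cl φ ψ := Cl.nc hcl
      simp only [Set.mem_setOf_eq]
      show _ ↔ ¬ (Cl φ (SForm.neg ψ) ∧ ¬ SSat M ψ σ i)
      constructor
      · rintro ⟨_, hs⟩ ⟨_, hn⟩; exact hn hs
      · intro hn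
        refine ⟨hψ, ?_⟩
        by_contra hns
        exact hn ⟨hcl, hns⟩
    · intro a b hcl
      have ha : Cl φ a := cl_of_mem hcl (by
        simp only [subfs, Set.mem_insert_iff, Set.mem_union]
        exact Or.inr (Or.inl (subfs_self a)))
      have hb : Cl φ b := cl_of_mem hcl (by
        simp only [subfs, Set.mem_insert_iff, Set.mem_union]
        exact Or.inr (Or.inr (subfs_self b)))
      simp only [Set.mem_setOf_eq]
      show (Cl φ (SForm.conj a b) ∧ (SSat M a σ i ∧ SSat M b σ i)) ↔ _
      constructor
      · rintro ⟨_, hsa, hsb⟩; exact ⟨⟨ha, hsa⟩, ⟨hb, hsb⟩⟩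
      · rintro ⟨⟨_, hsa⟩, ⟨_, hsb⟩⟩; exact ⟨hcl, hsa, hsb⟩
    · intro a b hcl
      have ha : Cl φ a := cl_of_mem hcl (by
        simp only [subfs, Set.mem_insert_iff, Set.mem_union]
        exact Or.inr (Or.inl (subfs_self a)))
      have hb : Cl φ b := cl_of_mem hcl (by
        simp only [subfs, Set.mem_insert_iff, Set.mem_union]
        exact Or.inr (Or.inr (subfs_self b)))
      have hx : Cl φ (.next (.until_ a b)) := Cl.nextU hcl
      simp only [Set.mem_setOf_eq]
      have hun := until_unfold M a b σ i
      have hxeq : SSat M (SForm.next (SForm.until_ a b)) σ i ↔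
          SSat M (SForm.until_ a b) σ (i + 1) := Iff.rfl
      constructor
      · rintro ⟨_, hs⟩
        rcases hun.mp hs with hsb | ⟨hsa, hsn⟩
        · exact Or.inl ⟨hb, hsb⟩
        · exact Or.inr ⟨⟨ha, hsa⟩, ⟨hx, hxeq.mpr hsn⟩⟩
      · rintro (⟨_, hsb⟩ | ⟨⟨_, hsa⟩, ⟨_, hsn⟩⟩)
        · exact ⟨hcl, hun.mpr (Or.inl hsb)⟩
        · exact ⟨hcl, hun.mpr (Or.inr ⟨hsa, hxeq.mp hsn⟩)⟩
  · -- transitions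
    intro i ψ hcl
    have hψ : Cl φ ψ := cl_of_mem hcl (by
      simp only [subfs, Set.mem_insert_iff]
      exact Or.inr (subfs_self ψ))
    simp only [Set.mem_setOf_eq]
    show (Cl φ (SForm.next ψ) ∧ SSat M ψ σ (i + 1)) ↔ _
    constructor
    · rintro ⟨_, hs⟩; exact ⟨hψ, hs⟩
    · rintro ⟨_, hs⟩; exact ⟨hcl, hs⟩
  · -- acceptance
    intro a b hcl i
    by_cases hsU : SSat M (.until_ a b) σ i
    · obtain ⟨i', h1, hsb, _⟩ := hsU
      have hb : Cl φ b := cl_of_mem hcl (by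
        simp only [subfs, Set.mem_insert_iff, Set.mem_union]
        exact Or.inr (Or.inr (subfs_self b)))
      exact ⟨i', h1, Or.inr ⟨hb, hsb⟩⟩
    · exact ⟨i, le_rfl, Or.inl (fun h => hsU h.2)⟩

theorem stmt4 (φ : SForm) (pv : ℕ × ℕ → ℕ) (P N : Finset (ℕ × ℕ))
    (hφ : isLTLPSL φ) (hinj : Function.Injective pv)
    (hfresh : ∀ pr, pv pr ∉ varsSF φ)
    (hpart : P ∪ N = leSubs φ) (hdisj : Disjoint P N) :
    SLTLSatisfiable (phiD φ P N pv) → LangNonempty (phiD φ P N pv) := by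
  exact sat_implies_lang _
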